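/- (Deformed Jensen inequality) Let q > 0, η > 0, n ∈ ℕ, let p_1,…,p_n ≥ 0 with Σ_{m=1}^n p_m = 1, and let a_1,…,a_n ∈ ℝ be such that, if q ≠ 1, 1 + (1-q)η^{-1}a_m > 0 for every m. Then η · ln_q( Σ_{m=1}^n p_m exp_q(η^{-1} a_m) ) ≥ Σ_{m=1}^n p_m a_m. -/

import Mathlib

open Real

noncomputable section

/-- Tsallis deformed exponential `exp_q`. -/
noncomputable def texp (q z : ℝ) : ℝ :=
  if q = 1 then Real.exp z else (max (1 + (1 - q) * z) 0) ^ ((1:ℝ) / (1 - q))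

/-- Tsallis deformed logarithm `ln_q`. -/
noncomputable def tlog (q y : ℝ) : ℝ :=
  if q = 1 then Real.log y else (y ^ (1 - q) - 1) / (1 - q)

open Set in
lemma convexOn_rpow_neg {r : ℝ} (hr : r < 0) :
    ConvexOn ℝ (Ioi (0:ℝ)) fun x : ℝ => x ^ r := by
  have := strictConvexOn_of_deriv2_pos' (convex_Ioi (0:ℝ)) (f := fun x : ℝ => x ^ r)
    (fun x hx => (Real.continuousAt_rpow_const x r (Or.inl (ne_of_gt hx))).continuousWithinAt)
    (fun x hx => ?_)
  · exact this.convexOn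
  · have hx : (0:ℝ) < x := hx
    have h1 : deriv (fun y : ℝ => y ^ r) =ᶠ[nhds x] fun y => r * y ^ (r - 1) := by
      filter_upwards [eventually_ne_nhds hx.ne'] with y hy
      exact Real.deriv_rpow_const y r
    have h2 : deriv^[2] (fun y : ℝ => y ^ r) x = deriv (fun y => r * y ^ (r - 1)) x := by
      simp only [Function.iterate_succ, Function.iterate_zero, Function.comp_apply, id]
      exact Filter.EventuallyEq.deriv_eq h1
    rw [h2, deriv_const_mul _ ((Real.hasDerivAt_rpow_const (Or.inl hx.ne')).differentiableAt),
      Real.deriv_rpow_const x (r - 1)]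
    have hrr : 0 < r * (r - 1) := mul_pos_of_neg_of_neg hr (by linarith)
    have hxp := Real.rpow_pos_of_pos hx (r - 1 - 1)
    nlinarith

/-- Deformed Jensen inequality: let `q > 0`, `η > 0`, weights
`p_1, …, p_n ≥ 0` with `Σ p_m = 1`, and `a_1, …, a_n ∈ ℝ` such that, if `q ≠ 1`,
`1 + (1-q)η⁻¹ a_m > 0` for every `m`. Then
`η ln_q( Σ_m p_m exp_q(η⁻¹ a_m) ) ≥ Σ_m p_m a_m`. -/
theorem deformed_jensen (q η : ℝ) (hq : 0 < q) (hη : 0 < η) (n : ℕ)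
    (p a : Fin n → ℝ) (hp : ∀ m, 0 ≤ p m) (hps : ∑ m, p m = 1)
    (ha : q ≠ 1 → ∀ m, 0 < 1 + (1 - q) * (η⁻¹ * a m)) :
    ∑ m, p m * a m ≤ η * tlog q (∑ m, p m * texp q (η⁻¹ * a m)) := by
  set x : Fin n → ℝ := fun m => η⁻¹ * a m with hx
  have hax : ∑ m, p m * a m = η * ∑ m, p m * x m := by
    rw [Finset.mul_sum]
    refine Finset.sum_congr rfl fun m _ => ?_
    field_simp [hx]
    simp only [hx]
    rw [← mul_assoc, mul_assoc (p m), mul_inv_cancel₀ hη.ne', mul_one]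
  rw [hax]
  by_cases h1 : q = 1
  · subst h1
    simp only [texp, tlog, if_pos rfl, if_true]
    have hjen : Real.exp (∑ m, p m • x m) ≤ ∑ m, p m • Real.exp (x m) :=
      convexOn_exp.map_sum_le (fun m _ => hp m) hps (fun m _ => Set.mem_univ _)
    simp only [smul_eq_mul] at hjen
    have := Real.log_le_log (Real.exp_pos _) hjen
    rw [Real.log_exp] at this
    exact mul_le_mul_of_nonneg_left this hη.le
  · -- q ≠ 1
    have ha := ha h1
    set c : ℝ := 1 - q with hc
    have hc0 : c ≠ 0 := sub_ne_zero.mpr (Ne.symm h1)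
    set u : Fin n → ℝ := fun m => 1 + c * x m with hu
    have hum : ∀ m, 0 < u m := ha
    have htexp : ∀ m, texp q (x m) = u m ^ ((1:ℝ)/c) := by
      intro m
      simp only [texp, if_neg h1, ← hc, ← hu, max_eq_left (hum m).le]
      exact congrArg (· ^ ((1:ℝ)/c)) (max_eq_left (hum m).le)
    have htexp' : ∀ m, texp q (η⁻¹ * a m) = u m ^ ((1:ℝ)/c) := htexp
    simp only [htexp, htexp', tlog, if_neg h1, ← hc]
    set S : ℝ := ∑ m, p m * u m ^ ((1:ℝ)/c) with hS
    set T : ℝ := ∑ m, p m * u m with hT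
    have hTx : T = 1 + c * ∑ m, p m * x m := by
      have : T = ∑ m, (p m + c * (p m * x m)) := by
        refine Finset.sum_congr rfl fun m _ => ?_
        simp only [hu]; ring
      rw [this, Finset.sum_add_distrib, hps, ← Finset.mul_sum]
    obtain ⟨m₀, hm₀⟩ : ∃ m, p m ≠ 0 := by
      rcases Finset.exists_ne_zero_of_sum_ne_zero (by rw [hps]; norm_num :
        ∑ m, p m ≠ 0) with ⟨m, _, hm⟩
      exact ⟨m, hm⟩
    have hTpos : 0 < T := by
      have : p m₀ * u m₀ ≤ T :=
        Finset.single_le_sum (fun m _ => mul_nonneg (hp m) (hum m).le) (Finset.mem_univ m₀)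
      exact lt_of_lt_of_le (mul_pos ((hp m₀).lt_of_ne' hm₀) (hum m₀)) this
    have hjen : T ^ ((1:ℝ)/c) ≤ S := by
      rcases lt_or_gt_of_ne hc0 with hcneg | hcpos
      · have hconv := convexOn_rpow_neg (r := (1:ℝ)/c) (div_neg_of_pos_of_neg one_pos hcneg)
        have := hconv.map_sum_le (t := Finset.univ) (w := p) (p := u)
          (fun m _ => hp m) hps (fun m _ => hum m)
        simpa only [smul_eq_mul, Finset.smul_sum] using this
      · have he1 : (1:ℝ) ≤ 1/c := by
          rw [le_div_iff₀ hcpos]; simp only [hc]; linarith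
        have hconv := convexOn_rpow he1
        have := hconv.map_sum_le (t := Finset.univ) (w := p) (p := u)
          (fun m _ => hp m) hps (fun m _ => (hum m).le)
        simpa only [smul_eq_mul, Finset.smul_sum] using this
    have hTc : (T ^ ((1:ℝ)/c)) ^ c = T := by
      rw [← Real.rpow_mul hTpos.le, one_div, inv_mul_cancel₀ hc0, Real.rpow_one]
    have key : ∑ m, p m * x m ≤ (S ^ c - 1) / c := by
      rcases lt_or_gt_of_ne hc0 with hcneg | hcpos
      · have hSc : S ^ c ≤ T := by
          have := Real.rpow_le_rpow_of_nonpos (Real.rpow_pos_of_pos hTpos _) hjen hcneg.le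
          rwa [hTc] at this
        rw [le_div_iff_of_neg hcneg]
        nlinarith
      · have hSc : T ≤ S ^ c := by
          have := Real.rpow_le_rpow (Real.rpow_nonneg hTpos.le _) hjen hcpos.le
          rwa [hTc] at this
        rw [le_div_iff₀ hcpos]
        nlinarith
    exact mul_le_mul_of_nonneg_left key hη.le


end
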